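/- If Θ = (α, α, α) is an autotopism of some Latin square of order n where α is a single n-cycle, then n is odd. -/

import Mathlib

open Classical

/-- Number of cycles of length `r` in the disjoint cycle decomposition of `δ`
(fixed points count as cycles of length 1). -/
noncomputable def cyclesOfLen {n : ℕ} (δ : Equiv.Perm (Fin n)) (r : ℕ) : ℕ :=
  (Finset.univ.filter fun x : Fin n => Function.minimalPeriod (⇑δ) x = r).card / r

/-- `L` is (the table of) a Latin square of order `n`. -/
def IsLatinSquare {n : ℕ} (L : Fin n → Fin n → Fin n) : Prop :=
  (∀ i, Function.Bijective (L i)) ∧ ∀ j, Function.Bijective fun i => L i j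

/-- `(α, β, γ)` is an autotopism of `L`: `(i,j,k) ∈ L → (α i, β j, γ k) ∈ L`. -/
def IsAutotopism {n : ℕ} (L : Fin n → Fin n → Fin n)
    (α β γ : Equiv.Perm (Fin n)) : Prop :=
  ∀ i j, L (α i) (β j) = γ (L i j)

theorem stmt5 {n : ℕ} (L : Fin n → Fin n → Fin n) (α : Equiv.Perm (Fin n))
    (hL : IsLatinSquare L) (hA : IsAutotopism L α α α)
    (hc : α.IsCycle) (hcard : α.support.card = n) : Odd n := by
  obtain ⟨hL1, hL2⟩ := hL
  have hL : (∀ i, Function.Bijective (L i)) ∧ ∀ j, Function.Bijective fun i => L i j := ⟨hL1, hL2⟩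
  have hA : ∀ i j, L (α i) (α j) = α (L i j) := hA
  rcases Nat.even_or_odd n with ⟨m, hm⟩ | h
  swap
  · exact h
  exfalso
  obtain ⟨x0, hx0, -⟩ := id hc
  have hn1 : 1 ≤ n := Nat.pos_of_ne_zero (by rintro rfl; exact x0.elim0)
  have hm1 : 1 ≤ m := by omega
  haveI : NeZero n := ⟨by omega⟩
  haveI : Fact (1 < n) := ⟨by omega⟩
  have hsupp : α.support = Finset.univ :=
    Finset.eq_univ_of_card _ (by simp [hcard])
  have hne : ∀ y, α y ≠ y := fun y =>
    Equiv.Perm.mem_support.mp (hsupp ▸ Finset.mem_univ y)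
  have horder : orderOf α = n := by rw [hc.orderOf, hcard]
  set φ : ZMod n → Fin n := fun k => (α ^ k.val) x0 with hφ
  have hsurj : Function.Surjective φ := by
    intro y
    obtain ⟨i, hi⟩ := hc.exists_pow_eq hx0 (hne y)
    refine ⟨(i : ZMod n), ?_⟩
    have : α ^ ((i : ZMod n)).val = α ^ i := by
      rw [ZMod.val_natCast]
      have h2 := pow_mod_orderOf α i
      rwa [horder] at h2
    simp only [hφ, this, hi]
  have hbij : Function.Bijective φ :=
    (Fintype.bijective_iff_surjective_and_card φ).mpr ⟨hsurj, by simp [ZMod.card]⟩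
  set e : ZMod n ≃ Fin n := Equiv.ofBijective φ hbij with he
  have he1 : ∀ k : ZMod n, e (k + 1) = α (e k) := by
    intro k
    show φ (k + 1) = α (φ k)
    simp only [hφ]
    have hval : (k + 1).val = (k.val + 1) % n := by
      rw [ZMod.val_add, ZMod.val_one]
    have hpow : α ^ ((k.val + 1) % n) = α ^ (k.val + 1) := by
      have h2 := pow_mod_orderOf α (k.val + 1)
      rwa [horder] at h2
    rw [hval, hpow, pow_succ']
    rfl
  set M : ZMod n → ZMod n → ZMod n := fun a b => e.symm (L (e a) (e b)) with hM
  have hM1 : ∀ a b, M (a + 1) (b + 1) = M a b + 1 := by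
    intro a b
    apply e.injective
    rw [he1]
    simp only [hM, Equiv.apply_symm_apply, he1, hA]
  have hMm : ∀ (a b : ZMod n) (k : ℕ), M (a + k) (b + k) = M a b + k := by
    intro a b k
    induction k with
    | zero => simp
    | succ k ih =>
      push_cast
      rw [← add_assoc, ← add_assoc, hM1, ih, add_assoc]
  set g : ZMod n → ZMod n := fun c => M c 0 with hg
  have hrow : ∀ b : ZMod n, M 0 b = g (-b) + b := by
    intro b
    have := hMm (-b) 0 b.val
    rwa [ZMod.natCast_val, ZMod.cast_id, neg_add_cancel, zero_add] at this
  have hgbij : Function.Bijective g := by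
    have : g = e.symm ∘ (fun i => L i (e 0)) ∘ e := rfl
    rw [this]
    exact (e.symm.bijective.comp (hL.2 (e 0))).comp e.bijective
  have hrowbij : Function.Bijective (fun b => M 0 b) := by
    have : (fun b => M 0 b) = e.symm ∘ (L (e 0)) ∘ e := rfl
    rw [this]
    exact (e.symm.bijective.comp (hL.1 (e 0))).comp e.bijective
  have hsum1 : ∑ b : ZMod n, M 0 b = ∑ b : ZMod n, b :=
    Function.Bijective.sum_comp hrowbij id
  have hsum2 : ∑ b : ZMod n, g (-b) = ∑ b : ZMod n, b :=
    Function.Bijective.sum_comp (hgbij.comp neg_involutive.bijective) id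
  have hS0 : (∑ b : ZMod n, b) = 0 := by
    have h2 : ∑ b : ZMod n, M 0 b = (∑ b : ZMod n, g (-b)) + ∑ b : ZMod n, b := by
      rw [← Finset.sum_add_distrib]
      exact Finset.sum_congr rfl fun b _ => hrow b
    rw [hsum1, hsum2] at h2
    exact left_eq_add.mp h2
  -- compute the sum
  have hfinbij : Function.Bijective (fun i : Fin n => ((i : ℕ) : ZMod n)) := by
    refine (Fintype.bijective_iff_injective_and_card _).mpr ⟨?_, by simp [ZMod.card]⟩
    intro i j hij
    have h2 : ((i : ℕ) : ZMod n).val = ((j : ℕ) : ZMod n).val := congrArg ZMod.val hij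
    rw [ZMod.val_natCast_of_lt i.isLt, ZMod.val_natCast_of_lt j.isLt] at h2
    exact Fin.ext h2
  have hSval : (∑ b : ZMod n, b) = ((∑ i ∈ Finset.range n, i : ℕ) : ZMod n) := by
    rw [Nat.cast_sum, ← Fin.sum_univ_eq_sum_range (fun i => ((i : ℕ) : ZMod n))]
    exact (Function.Bijective.sum_comp hfinbij id).symm
  have hgauss : (∑ i ∈ Finset.range n, i) = m * (n - 1) := by
    have h1 := Finset.sum_range_id_mul_two n
    have h2 : n * (n - 1) = m * (n - 1) * 2 := by
      rw [hm]; generalize (m + m - 1) = t; ring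
    exact Nat.eq_of_mul_eq_mul_right (by norm_num) (h1.trans h2)
  rw [hgauss, Nat.cast_mul, Nat.cast_sub hn1, ZMod.natCast_self, Nat.cast_one,
    zero_sub, mul_neg_one] at hSval
  rw [hSval, neg_eq_zero, ZMod.natCast_eq_zero_iff] at hS0
  have := Nat.le_of_dvd hm1 hS0
  omega
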